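/- Let R be a discrete valuation ring with uniformizer π, and let a₁,…,aₙ, b₁,…,bₙ ∈ Rᵐ. Then there exist indices i₁,…,i_r, j₁,…,j_s ∈ [n] with r + s ≤ m and an integer e ≥ 0 such that: (1) a_{i₁},…,a_{i_r} generate the R-submodule N = Ra₁ + ⋯ + Raₙ of Rᵐ; and (2) for each i ∈ [n], πᵉ b_i ∈ N + Rπᵉb_{j₁} + ⋯ + Rπᵉb_{j_s}. -/

import Mathlib

open Submodule Set

section Extract

variable {R : Type*} [CommRing R]

lemma extract_aux [IsLocalRing R] {M : Type*} [AddCommGroup M] [Module R M]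
    {n : ℕ} (v : Fin n → M) :
    ∃ (r : ℕ) (ii : Fin r → Fin n),
      Submodule.span R (Set.range (v ∘ ii)) = Submodule.span R (Set.range v) ∧
      ∀ c : Fin r → R, (∑ l, c l • v (ii l)) ∈
          (IsLocalRing.maximalIdeal R) • Submodule.span R (Set.range v) →
        ∀ l, c l ∈ IsLocalRing.maximalIdeal R := by
  classical
  set N := Submodule.span R (Set.range v) with hNdef
  set cands : Finset (Finset (Fin n)) :=
    Finset.univ.filter (fun S => Submodule.span R (v '' ↑S) = N) with hcands
  have huniv : Finset.univ ∈ cands := by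
    simp [hcands, Finset.coe_univ, Set.image_univ, hNdef]
  obtain ⟨S, hS, hmin⟩ := Finset.exists_min_image cands Finset.card ⟨_, huniv⟩
  have hSspan : Submodule.span R (v '' ↑S) = N := by
    simpa [hcands] using hS
  set r := S.card with hr
  set e : Fin r ≃ {x // x ∈ S} := S.equivFin.symm with he
  set ii : Fin r → Fin n := fun l => (e l : Fin n) with hii
  have hiiS : ∀ l, ii l ∈ S := fun l => (e l).2
  have hiinj : Function.Injective ii := by
    intro x y hxy
    exact e.injective (Subtype.ext hxy)
  have hrange : Set.range (v ∘ ii) = v '' ↑S := by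
    ext x
    simp only [Set.mem_range, Function.comp_apply, Set.mem_image, Finset.mem_coe]
    constructor
    · rintro ⟨l, rfl⟩; exact ⟨ii l, hiiS l, rfl⟩
    · rintro ⟨y, hy, rfl⟩
      exact ⟨e.symm ⟨y, hy⟩, by simp [hii]⟩
  refine ⟨r, ii, by rw [hrange, hSspan], ?_⟩
  intro c hc
  by_contra hne
  push_neg at hne
  obtain ⟨l0, hl0⟩ := hne
  have hunit : IsUnit (c l0) := by
    by_contra h
    exact hl0 (IsLocalRing.mem_maximalIdeal (c l0) |>.mpr h)
  obtain ⟨u, hu⟩ := hunit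
  set S' := S.erase (ii l0) with hS'
  set K := Submodule.span R (v '' ↑S') ⊔ (IsLocalRing.maximalIdeal R) • N with hK
  have hterm : ∀ l, l ≠ l0 → c l • v (ii l) ∈ K := by
    intro l hl
    have : ii l ∈ S' := Finset.mem_erase.mpr ⟨fun h => hl (hiinj h), hiiS l⟩
    exact K.smul_mem _ (le_sup_left (α := Submodule R M)
      (Submodule.subset_span ⟨ii l, this, rfl⟩))
  have hK0 : v (ii l0) ∈ K := by
    have hsum : (∑ l, c l • v (ii l)) ∈ K := le_sup_right (α := Submodule R M) hc
    have hrest : (∑ l ∈ Finset.univ.erase l0, c l • v (ii l)) ∈ K :=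
      Submodule.sum_mem _ (fun l hl => hterm l (Finset.ne_of_mem_erase hl))
    have hc0 : c l0 • v (ii l0) ∈ K := by
      have := Finset.sum_erase_eq_sub (f := fun l => c l • v (ii l))
        (Finset.mem_univ l0)
      have heq : c l0 • v (ii l0) = (∑ l, c l • v (ii l)) -
          ∑ l ∈ Finset.univ.erase l0, c l • v (ii l) := by
        rw [this]; abel
      rw [heq]
      exact Submodule.sub_mem _ hsum hrest
    have := K.smul_mem (↑u⁻¹ : R) hc0
    rwa [← hu, ← mul_smul, Units.inv_mul, one_smul] at this
  have hle : N ≤ Submodule.span R (v '' ↑S') ⊔ (IsLocalRing.maximalIdeal R) • N := by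
    conv_lhs => rw [← hSspan]
    apply Submodule.span_le.mpr
    rintro x ⟨j, hj, rfl⟩
    by_cases hj0 : j = ii l0
    · subst hj0; exact hK0
    · exact le_sup_left (α := Submodule R M)
        (Submodule.subset_span ⟨j, Finset.mem_erase.mpr ⟨hj0, hj⟩, rfl⟩)
  have hNfg : N.FG := Submodule.fg_span (Set.finite_range v)
  have hjac : IsLocalRing.maximalIdeal R ≤ Ideal.jacobson ⊥ :=
    (IsLocalRing.jacobson_eq_maximalIdeal ⊥ bot_ne_top).ge
  have hNle : N ≤ Submodule.span R (v '' ↑S') :=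
    Submodule.le_of_le_smul_of_le_jacobson_bot hNfg hjac hle
  have hS'span : Submodule.span R (v '' ↑S') = N := by
    refine le_antisymm ?_ hNle
    apply Submodule.span_le.mpr
    rintro x ⟨j, _, rfl⟩
    exact Submodule.subset_span ⟨j, rfl⟩
  have hS'cands : S' ∈ cands := by simp [hcands, hS'span]
  have := hmin S' hS'cands
  have hlt : S'.card < S.card := Finset.card_erase_lt_of_mem (hiiS l0)
  omega

lemma extract_indep [IsLocalRing R] [IsDomain R] [IsPrincipalIdealRing R]
    {M : Type*} [AddCommGroup M] [Module R M] {n : ℕ} (v : Fin n → M)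
    (htf : ∀ (g : R) (x : M), x ∈ Submodule.span R (Set.range v) → g ≠ 0 → g • x = 0 → x = 0) :
    ∃ (r : ℕ) (ii : Fin r → Fin n),
      Submodule.span R (Set.range (v ∘ ii)) = Submodule.span R (Set.range v) ∧
      ∀ c : Fin r → R, (∑ l, c l • v (ii l)) = 0 → ∀ l, c l = 0 := by
  obtain ⟨r, ii, h1, h2⟩ := extract_aux (R := R) v
  refine ⟨r, ii, h1, fun c hc => ?_⟩
  by_contra hne
  push_neg at hne
  obtain ⟨l0, hl0⟩ := hne
  set J : Ideal R := Ideal.span (Set.range c) with hJ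
  set g := Submodule.IsPrincipal.generator J with hg
  have hgJ : Ideal.span {g} = J := Ideal.span_singleton_generator J
  have hmem : ∀ l, c l ∈ J := fun l => Ideal.subset_span ⟨l, rfl⟩
  have hg0 : g ≠ 0 := by
    intro h
    apply hl0
    have := hmem l0
    rw [← hgJ, h, Ideal.span_singleton_eq_bot.mpr rfl] at this
    simpa using this
  choose c' hc' using fun l => (Submodule.IsPrincipal.mem_iff_eq_smul_generator J).mp (hmem l)
  have hy : g • (∑ l, c' l • v (ii l)) = 0 := by
    rw [Finset.smul_sum, ← hc]
    refine Finset.sum_congr rfl (fun l _ => ?_)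
    rw [smul_smul, mul_comm, ← smul_eq_mul, ← hc' l]
  have hy0 : (∑ l, c' l • v (ii l)) = 0 := by
    refine htf g _ ?_ hg0 hy
    exact Submodule.sum_mem _ (fun l _ =>
      Submodule.smul_mem _ _ (Submodule.subset_span ⟨ii l, rfl⟩))
  have hall : ∀ l, c' l ∈ IsLocalRing.maximalIdeal R :=
    h2 c' (by rw [hy0]; exact Submodule.zero_mem _)
  have hle : J ≤ (IsLocalRing.maximalIdeal R) • J := by
    have : J ≤ (IsLocalRing.maximalIdeal R) • Ideal.span {g} := by
      apply Ideal.span_le.mpr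
      rintro x ⟨l, rfl⟩
      rw [hc' l]
      exact Submodule.smul_mem_smul (hall l) (Submodule.mem_span_singleton_self g)
    rwa [hgJ] at this
  have hJfg : J.FG := ⟨{g}, by simpa using hgJ⟩
  have hjac : IsLocalRing.maximalIdeal R ≤ Ideal.jacobson ⊥ :=
    (IsLocalRing.jacobson_eq_maximalIdeal ⊥ bot_ne_top).ge
  have hbot := Submodule.eq_bot_of_le_smul_of_le_jacobson_bot
    (IsLocalRing.maximalIdeal R) J hJfg hle hjac
  apply hg0
  have hgmem : g ∈ J := by rw [hg]; exact Submodule.IsPrincipal.generator_mem J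
  rw [hbot] at hgmem
  simpa using hgmem

end Extract

theorem stmt16 {R : Type*} [CommRing R] [IsDomain R] [IsDiscreteValuationRing R]
    (π : R) (hπ : Irreducible π) (m n : ℕ) (a b : Fin n → (Fin m → R)) :
    ∃ (r s : ℕ) (ii : Fin r → Fin n) (jj : Fin s → Fin n) (e : ℕ),
      r + s ≤ m ∧
      Submodule.span R (Set.range (a ∘ ii)) = Submodule.span R (Set.range a) ∧
      ∀ i : Fin n, (π ^ e) • b i ∈
        Submodule.span R (Set.range a) ⊔
          Submodule.span R (Set.range fun l => (π ^ e) • b (jj l)) := by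
  classical
  have hπ0 : π ≠ 0 := hπ.ne_zero
  set N : Submodule R (Fin m → R) := Submodule.span R (Set.range a) with hNdef
  -- extract generators of N among the a i
  obtain ⟨r, ii, ha1, ha2⟩ := extract_indep a
    (fun (g : R) (x : Fin m → R) _ hg hgx => by
      rcases smul_eq_zero.mp hgx with h | h
      · exact absurd h hg
      · exact h)
  -- the quotient module
  set V := (Fin m → R) ⧸ N with hV
  set q : (Fin m → R) →ₗ[R] V := N.mkQ with hq
  -- find e with π^e killing the torsion of V
  have hVfg : Module.Finite R V := Module.Finite.quotient R N
  have hNoeth : IsNoetherian R V := by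
    infer_instance
  obtain ⟨T, hT⟩ : (Submodule.torsion R V).FG := IsNoetherian.noetherian _
  have hTt : ∀ t ∈ T, (t : V) ∈ Submodule.torsion R V := by
    intro t ht
    rw [← hT]
    exact Submodule.subset_span ht
  have h1 : ∀ t : V, t ∈ Submodule.torsion R V → ∃ g : R, g ≠ 0 ∧ g • t = 0 := by
    intro t ht
    obtain ⟨⟨g, hg⟩, hgt⟩ := (Submodule.mem_torsion_iff t).mp ht
    exact ⟨g, nonZeroDivisors.ne_zero hg, hgt⟩
  choose! g hg0 hgt using h1
  set G : R := ∏ t ∈ T, g t with hG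
  have hG0 : G ≠ 0 := Finset.prod_ne_zero_iff.mpr (fun t ht => hg0 t (hTt t ht))
  have hGkill : ∀ x ∈ Submodule.torsion R V, G • x = 0 := by
    intro x hx
    rw [← hT] at hx
    induction hx using Submodule.span_induction with
    | mem t ht =>
      have h1 : G = (∏ s ∈ T.erase t, g s) * g t := by
        rw [hG, mul_comm, Finset.mul_prod_erase _ _ ht]
      rw [h1, mul_smul, hgt t (hTt t ht), smul_zero]
    | zero => simp
    | add x y _ _ hx hy => rw [smul_add, hx, hy, add_zero]
    | smul r x _ hx => rw [smul_comm, hx, smul_zero]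
  obtain ⟨e, u, hGu⟩ := IsDiscreteValuationRing.eq_unit_mul_pow_irreducible hG0 hπ
  have hkill : ∀ x ∈ Submodule.torsion R V, (π ^ e) • x = 0 := by
    intro x hx
    have : (π ^ e : R) • x = (↑u⁻¹ : R) • (G • x) := by
      rw [← mul_smul, hGu, ← mul_assoc, Units.inv_mul, one_mul]
    rw [this, hGkill x hx, smul_zero]
  -- the family π^e • (b i mod N)
  set w : Fin n → V := fun i => (π ^ e) • q (b i) with hw
  have hform : ∀ x ∈ Submodule.span R (Set.range w), ∃ y : V, x = (π ^ e) • y := by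
    intro x hx
    induction hx using Submodule.span_induction with
      | mem z hz =>
        obtain ⟨i, rfl⟩ := hz
        exact ⟨q (b i), rfl⟩
      | zero => exact ⟨0, by simp⟩
      | add x y _ _ hx hy =>
        obtain ⟨x', rfl⟩ := hx; obtain ⟨y', rfl⟩ := hy
        exact ⟨x' + y', by rw [smul_add]⟩
      | smul r x _ hx =>
        obtain ⟨x', rfl⟩ := hx
        exact ⟨r • x', by rw [smul_comm]⟩
  have htfW : ∀ (c : R) (x : V), x ∈ Submodule.span R (Set.range w) →
      c ≠ 0 → c • x = 0 → x = 0 := by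
    intro c x hx hc hcx
    obtain ⟨y, rfl⟩ := hform x hx
    have hytor : y ∈ Submodule.torsion R V := by
      refine (Submodule.mem_torsion_iff y).mpr
        ⟨⟨c * π ^ e, mem_nonZeroDivisors_of_ne_zero (mul_ne_zero hc (pow_ne_zero e hπ0))⟩, ?_⟩
      show (c * π ^ e) • y = 0
      rw [mul_smul]
      exact hcx
    exact hkill y hytor
  obtain ⟨s, jj, hw1, hw2⟩ := extract_indep w htfW
  refine ⟨r, s, ii, jj, e, ?_, ha1, ?_⟩
  · -- rank count
    set z : Fin r ⊕ Fin s → (Fin m → R) :=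
      Sum.elim (a ∘ ii) (fun l => (π ^ e) • b (jj l)) with hz
    have hzind : LinearIndependent R z := by
      rw [Fintype.linearIndependent_iff]
      intro c h0
      have hq0 : ∑ l, c (Sum.inr l) • w (jj l) = 0 := by
        have := congrArg q h0
        rw [map_sum, map_zero, Fintype.sum_sum_type] at this
        simp only [hz, Sum.elim_inl, Sum.elim_inr, Function.comp_apply, map_smul] at this
        have hkera : ∀ i : Fin r, q (a (ii i)) = 0 := by
          intro i
          rw [hq, Submodule.mkQ_apply, Submodule.Quotient.mk_eq_zero]
          exact Submodule.subset_span ⟨ii i, rfl⟩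
        simp only [hkera, smul_zero, Finset.sum_const_zero, zero_add] at this
        simpa [hw] using this
      have hinr : ∀ l, c (Sum.inr l) = 0 := hw2 _ hq0
      have h0' : ∑ i, c (Sum.inl i) • a (ii i) = 0 := by
        rw [Fintype.sum_sum_type] at h0
        simp only [hz, Sum.elim_inl, Sum.elim_inr, Function.comp_apply, hinr,
          zero_smul, Finset.sum_const_zero, add_zero] at h0
        exact h0
      have hinl : ∀ i, c (Sum.inl i) = 0 := ha2 _ h0'
      rintro (i | l)
      · exact hinl i
      · exact hinr l
    have hcard := hzind.fintype_card_le_finrank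
    simpa [Module.finrank_pi] using hcard
  · -- membership
    intro i
    set P : Submodule R (Fin m → R) :=
      Submodule.span R (Set.range fun l => (π ^ e) • b (jj l)) with hP
    have hmapP : Submodule.map q P = Submodule.span R (Set.range (w ∘ jj)) := by
      have hfun : (⇑q ∘ fun l => (π ^ e) • b (jj l)) = w ∘ jj := by
        funext l; simp [hw]
      rw [hP, Submodule.map_span, ← Set.range_comp, hfun]
    have hwi : q ((π ^ e) • b i) ∈ Submodule.map q P := by
      rw [hmapP, hw1]
      exact Submodule.subset_span ⟨i, by simp [hw]⟩
    have := Submodule.mem_comap.mpr hwi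
    rw [Submodule.comap_map_eq, Submodule.ker_mkQ] at this
    rw [sup_comm] at this
    exact this
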